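/- Let C be a K-linear abelian category, L/K a finite Galois extension with group G, and M an object of the base-changed category C_L such that End_{C_L}(M) ≅ L and M ≅ ᵍM for all g ∈ G. Given a choice of isomorphisms c_g : M → ᵍM, the function ξ(g,h) = c_{gh}^{-1} ∘ ᵍc_h ∘ c_g, valued in Aut(M) ≅ L^*, is a 2-cocycle: ᵍ¹ξ(g₂,g₃)·ξ(g₁,g₂g₃) = ξ(g₁g₂,g₃)·ξ(g₁,g₂). -/
import Mathlib


open CategoryTheory

/-- **The descent function `ξ_{M,c}` is a 2-cocycle.**
Let `C` be (the base change to `L` of) a `K`-linear abelian category, `L/K` a finite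
Galois extension with group `G = Gal(L/K)` acting on `C` by the (strict) twisting
functors `ρ g` (which are `g`-semilinear on Hom-spaces), and let `M` be an object with
`End(M) ≅ L` and `M ≅ ᵍM` for all `g`.  Given a choice of isomorphisms `c g : M ≅ ᵍM`,
the function `ξ(g,h) ∈ L^*` determined by
`c_{gh}⁻¹ ∘ ᵍc_h ∘ c_g = ξ(g,h) • 𝟙 M`
satisfies the 2-cocycle identity `ᵍ¹ξ(g₂,g₃) · ξ(g₁, g₂g₃) = ξ(g₁g₂, g₃) · ξ(g₁,g₂)`. -/
theorem descent_xi_is_cocycle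
    (K L : Type*) [Field K] [Field L] [Algebra K L] [IsGalois K L]
    [FiniteDimensional K L]
    (C : Type*) [Category C] [Preadditive C] [Linear L C]
    (ρ : (L ≃ₐ[K] L) → C ⥤ C)
    (hmul : ∀ g h : L ≃ₐ[K] L, ρ (g * h) = ρ h ⋙ ρ g)
    (hsemi : ∀ (g : L ≃ₐ[K] L) (X Y : C) (f : X ⟶ Y) (a : L),
      (ρ g).map (a • f) = g a • (ρ g).map f)
    (M : C)
    (hEnd : Function.Bijective (fun a : L => a • (𝟙 M)))
    (c : ∀ g : L ≃ₐ[K] L, M ≅ (ρ g).obj M)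
    (ξ : (L ≃ₐ[K] L) → (L ≃ₐ[K] L) → L)
    (hξ : ∀ g h : L ≃ₐ[K] L,
      (c g).hom ≫ (ρ g).map (c h).hom ≫
        eqToHom (show (ρ g).obj ((ρ h).obj M) = (ρ (g * h)).obj M by
          rw [hmul g h]; rfl) ≫ (c (g * h)).inv
        = ξ g h • 𝟙 M) :
    ∀ g₁ g₂ g₃ : L ≃ₐ[K] L,
      g₁ (ξ g₂ g₃) * ξ g₁ (g₂ * g₃) = ξ (g₁ * g₂) g₃ * ξ g₁ g₂ := by
  intro g₁ g₂ g₃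
  have e : ∀ g h : L ≃ₐ[K] L, (ρ g).obj ((ρ h).obj M) = (ρ (g * h)).obj M :=
    fun g h => by rw [hmul g h]; rfl
  have key : ∀ g h : L ≃ₐ[K] L,
      (c g).hom ≫ (ρ g).map (c h).hom ≫ eqToHom (e g h) = ξ g h • (c (g * h)).hom := by
    intro g h
    have h2 := congrArg (fun f => f ≫ (c (g * h)).hom) (hξ g h)
    simpa [Category.assoc, Linear.smul_comp] using h2
  have hassoc : g₁ * (g₂ * g₃) = g₁ * g₂ * g₃ := (mul_assoc _ _ _).symm
  have hobj : (ρ (g₁ * (g₂ * g₃))).obj M = (ρ (g₁ * g₂ * g₃)).obj M := by rw [hassoc]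
  have hc : ∀ (g k : L ≃ₐ[K] L) (h : g = k),
      (c g).hom ≫ eqToHom (congrArg (fun x => (ρ x).obj M) h) = (c k).hom := by
    rintro g k rfl; simp
  have hcomp := Functor.congr_hom (hmul g₁ g₂) (c g₃).hom
  have calc1 :
      (c g₁).hom ≫ (ρ g₁).map ((c g₂).hom ≫ (ρ g₂).map (c g₃).hom ≫ eqToHom (e g₂ g₃)) ≫
          eqToHom (e g₁ (g₂ * g₃)) ≫ eqToHom hobj
        = (g₁ (ξ g₂ g₃) * ξ g₁ (g₂ * g₃)) • (c (g₁ * g₂ * g₃)).hom := by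
    rw [show (c g₂).hom ≫ (ρ g₂).map (c g₃).hom ≫ eqToHom (e g₂ g₃)
          = ξ g₂ g₃ • (c (g₂ * g₃)).hom from key g₂ g₃]
    rw [hsemi]
    simp only [Linear.smul_comp, Linear.comp_smul]
    rw [show (c g₁).hom ≫ (ρ g₁).map (c (g₂ * g₃)).hom ≫ eqToHom (e g₁ (g₂ * g₃)) ≫ eqToHom hobj
          = ((c g₁).hom ≫ (ρ g₁).map (c (g₂ * g₃)).hom ≫ eqToHom (e g₁ (g₂ * g₃))) ≫ eqToHom hobj by
        simp only [Category.assoc]]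
    rw [key g₁ (g₂ * g₃), Linear.smul_comp, smul_smul,
      hc (g₁ * (g₂ * g₃)) (g₁ * g₂ * g₃) hassoc]
  have calc2 :
      (c g₁).hom ≫ (ρ g₁).map ((c g₂).hom ≫ (ρ g₂).map (c g₃).hom ≫ eqToHom (e g₂ g₃)) ≫
          eqToHom (e g₁ (g₂ * g₃)) ≫ eqToHom hobj
        = (ξ (g₁ * g₂) g₃ * ξ g₁ g₂) • (c (g₁ * g₂ * g₃)).hom := by
    simp only [Functor.map_comp, Category.assoc, eqToHom_map, eqToHom_trans]
    have : (ρ g₁).map ((ρ g₂).map (c g₃).hom)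
        = eqToHom (e g₁ g₂) ≫ (ρ (g₁ * g₂)).map (c g₃).hom ≫ eqToHom (show (ρ (g₁*g₂)).obj ((ρ g₃).obj M) = (ρ g₁).obj ((ρ g₂).obj ((ρ g₃).obj M)) by rw [hmul g₁ g₂]; rfl) := by
      rw [hcomp]; simp [eqToHom_trans]
    rw [this]
    simp only [Category.assoc, eqToHom_trans]
    rw [show (c g₁).hom ≫ (ρ g₁).map (c g₂).hom ≫ eqToHom (e g₁ g₂) ≫
          (ρ (g₁ * g₂)).map (c g₃).hom ≫ eqToHom (e (g₁ * g₂) g₃)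
        = ((c g₁).hom ≫ (ρ g₁).map (c g₂).hom ≫ eqToHom (e g₁ g₂)) ≫
          (ρ (g₁ * g₂)).map (c g₃).hom ≫ eqToHom (e (g₁ * g₂) g₃) by simp only [Category.assoc]]
    rw [key g₁ g₂, Linear.smul_comp, key (g₁ * g₂) g₃, smul_smul, mul_comm]
  have main := calc1.symm.trans calc2
  have main2 := congrArg (fun f => f ≫ (c (g₁ * g₂ * g₃)).inv) main
  simp only [Linear.smul_comp, Category.assoc, Iso.hom_inv_id, Category.comp_id] at main2
  exact hEnd.1 main2
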